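/- The discontinuity problem DIS is computably discontinuous; in fact there is a total computable function D : ℕ^ℕ → ℕ^ℕ such that for every q ∈ ℕ^ℕ the values U(D(q)) and Φ_q(D(q)) are Kleene-equal (so in particular, whenever D(q) ∈ dom(Φ_q), then Φ_q(D(q)) = U(D(q)) ∉ DIS(D(q))). -/
import Mathlib


noncomputable section

/-- Baire space `ℕ^ℕ`. -/
abbrev Baire : Type := ℕ → ℕ

/-- The Cantor pairing `⟨n,k⟩ = (n+k)(n+k+1)/2 + k`. -/
def cpair (n k : ℕ) : ℕ := (n + k) * (n + k + 1) / 2 + k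

/-- The inverse of the Cantor pairing. -/
noncomputable def cunpair (m : ℕ) : ℕ × ℕ :=
  Classical.epsilon fun x : ℕ × ℕ => cpair x.1 x.2 = m

/-- A fixed bijective numbering `w : ℕ → List ℕ` of finite words. -/
def word (n : ℕ) : List ℕ := Denumerable.ofNat (List ℕ) n

/-- `l` is a finite prefix of the infinite sequence `p`. -/
def IsPrefixOf (l : List ℕ) (p : Baire) : Prop := l = (List.range l.length).map p

/-- Two words are comparable in the prefix order. -/
def WordComparable (u v : List ℕ) : Prop := u <+: v ∨ v <+: u

/-- The word `w(n_i)` decoded from the `i`-th entry of the code `q`. -/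
noncomputable def wn (q : Baire) (i : ℕ) : List ℕ := word (cunpair (q i)).1

/-- The word `w(k_i)` decoded from the `i`-th entry of the code `q`. -/
noncomputable def wk (q : Baire) (i : ℕ) : List ℕ := word (cunpair (q i)).2

/-- The code `q` is consistent. -/
def ConsistentCode (q : Baire) : Prop :=
  ∀ i j, WordComparable (wn q i) (wn q j) → WordComparable (wk q i) (wk q j)

/-- The continuous partial function `Φ_q :⊆ ℕ^ℕ → ℕ^ℕ` coded by `q`. -/
noncomputable def Phi (q : Baire) : Baire →. Baire := fun p =>
  ⟨ConsistentCode q ∧ ∀ m : ℕ, ∃ i, IsPrefixOf (wn q i) p ∧ m < (wk q i).length,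
   fun _ => Classical.epsilon fun x : Baire =>
      ∀ i, IsPrefixOf (wn q i) p → IsPrefixOf (wk q i) x⟩

/-- The pairing `⟨q,p⟩` on Baire space. -/
def bpair (q p : Baire) : Baire := fun n => if n % 2 = 0 then q (n / 2) else p (n / 2)

/-- Even part of a sequence. -/
def evens (r : Baire) : Baire := fun n => r (2 * n)

/-- Odd part of a sequence. -/
def odds (r : Baire) : Baire := fun n => r (2 * n + 1)

/-- The universal function `U(⟨q,p⟩) = Φ_q(p)`. -/
noncomputable def U : Baire →. Baire := fun r => Phi (evens r) (odds r)

/-- `h` is monotone for the prefix order. -/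
def MonotoneWord (h : List ℕ → List ℕ) : Prop := ∀ u v, u <+: v → h u <+: h v

/-- `h` approximates the partial function `F`. -/
def Approximates (h : List ℕ → List ℕ) (F : Baire →. Baire) : Prop :=
  ∀ p, ∀ hp : (F p).Dom,
    (∀ v, IsPrefixOf v p → IsPrefixOf (h v) ((F p).get hp)) ∧
    (∀ m : ℕ, ∃ v, IsPrefixOf v p ∧ m < (h v).length)

/-- `F :⊆ ℕ^ℕ → ℕ^ℕ` is continuous: some monotone word function approximates it. -/
def ContinuousPF (F : Baire →. Baire) : Prop := ∃ h, MonotoneWord h ∧ Approximates h F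

/-- `F :⊆ ℕ^ℕ → ℕ^ℕ` is computable: some computable monotone word function approximates it. -/
def ComputablePF (F : Baire →. Baire) : Prop :=
  ∃ h, Computable h ∧ MonotoneWord h ∧ Approximates h F

/-- A total function is computable iff it is computable as a partial function with full domain. -/
def ComputableTotal (F : Baire → Baire) : Prop := ComputablePF fun p => Part.some (F p)

/-- A problem (multivalued function on Baire space). -/
abbrev Problem : Type := Baire → Set Baire

/-- `F` is a realizer of the problem `f`. -/
def Realizes (F : Baire →. Baire) (f : Problem) : Prop :=
  ∀ p, (f p).Nonempty → ∃ h : (F p).Dom, (F p).get h ∈ f p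

/-- `f` is continuous: it has a continuous realizer. -/
def ContinuousProblem (f : Problem) : Prop := ∃ F, ContinuousPF F ∧ Realizes F f

/-- The discontinuity problem `DIS`. -/
noncomputable def DIS : Problem := fun p => {q | q ∉ U p}

/-- `D` is a discontinuity function for `f`. -/
def DiscontinuityFunction (D : Baire → Baire) (f : Problem) : Prop :=
  ∀ q, (f (D q)).Nonempty ∧ ∀ y ∈ Phi q (D q), y ∉ f (D q)

/-- `f` is computably discontinuous. -/
def ComputablyDiscontinuous (f : Problem) : Prop :=
  ∃ D, ComputableTotal D ∧ DiscontinuityFunction D f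

/-- `f` is effectively discontinuous. -/
def EffectivelyDiscontinuous (f : Problem) : Prop :=
  ∃ D : Baire → Baire, Continuous D ∧ DiscontinuityFunction D f

/-- Weihrauch reducibility `f ≤_W g`. -/
def WeihrauchRed (f g : Problem) : Prop :=
  ∃ H K : Baire →. Baire, ComputablePF H ∧ ComputablePF K ∧
    ∀ G : Baire →. Baire, Realizes G g →
      Realizes (fun p => (K p).bind fun s => (G s).bind fun t => H (bpair p t)) f

/-- Strong Weihrauch reducibility `f ≤_sW g`. -/
def StrongWeihrauchRed (f g : Problem) : Prop :=
  ∃ H K : Baire →. Baire, ComputablePF H ∧ ComputablePF K ∧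
    ∀ G : Baire →. Baire, Realizes G g →
      Realizes (fun p => (K p).bind fun s => (G s).bind fun t => H t) f

/-- Continuous Weihrauch reducibility `f ≤*_W g`. -/
def ContWeihrauchRed (f g : Problem) : Prop :=
  ∃ H K : Baire →. Baire, ContinuousPF H ∧ ContinuousPF K ∧
    ∀ G : Baire →. Baire, Realizes G g →
      Realizes (fun p => (K p).bind fun s => (G s).bind fun t => H (bpair p t)) f

/-- Continuous strong Weihrauch reducibility `f ≤*_sW g`. -/
def ContStrongWeihrauchRed (f g : Problem) : Prop :=
  ∃ H K : Baire →. Baire, ContinuousPF H ∧ ContinuousPF K ∧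
    ∀ G : Baire →. Baire, Realizes G g →
      Realizes (fun p => (K p).bind fun s => (G s).bind fun t => H t) f

/-- Concatenation of the first `n` moves. -/
def concatN (ms : ℕ → List ℕ) (n : ℕ) : List ℕ := ((List.range n).map ms).flatten

/-- The concatenated play is infinite. -/
def PlayInf (ms : ℕ → List ℕ) : Prop := ∀ m : ℕ, ∃ n, m < (concatN ms n).length

/-- The infinite sequence determined by an infinite play. -/
noncomputable def playLim (ms : ℕ → List ℕ) : Baire :=
  Classical.epsilon fun p : Baire => ∀ n, IsPrefixOf (concatN ms n) p

/-- Player II wins the run of the Wadge game of `f` given by the moves `xs` of I and `ys` of II. -/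
def WadgeIIWins (f : Problem) (xs ys : ℕ → List ℕ) : Prop :=
  (PlayInf xs ∧ (f (playLim xs)).Nonempty) → (PlayInf ys ∧ playLim ys ∈ f (playLim xs))

/-- The list of first `n` moves. -/
def histW (xs : ℕ → List ℕ) (n : ℕ) : List (List ℕ) := (List.range n).map xs

/-- `σ` is a winning strategy for Player II in the Wadge game of `f`. -/
def WadgeWinningII (f : Problem) (σ : List (List ℕ) → List ℕ) : Prop :=
  ∀ xs : ℕ → List ℕ, WadgeIIWins f xs fun i => σ (histW xs (i + 1))

/-- `σ` is a winning strategy for Player I in the Wadge game of `f`. -/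
def WadgeWinningI (f : Problem) (σ : List (List ℕ) → List ℕ) : Prop :=
  ∀ ys : ℕ → List ℕ, ¬ WadgeIIWins f (fun i => σ (histW ys i)) ys

/-- The list of first `n` values of a sequence. -/
def histN (x : Baire) (n : ℕ) : List ℕ := (List.range n).map x

/-- Player II wins the run `(x,y)` of the Lipschitz game of `f`. -/
def LipIIWins (f : Problem) (x y : Baire) : Prop := (f x).Nonempty → y ∈ f x

/-- `σ` is a winning strategy for Player II in the Lipschitz game of `f`. -/
def LipWinningII (f : Problem) (σ : List ℕ → ℕ) : Prop :=
  ∀ x : Baire, LipIIWins f x fun i => σ (histN x (i + 1))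

/-- `σ` is a winning strategy for Player I in the Lipschitz game of `f`. -/
def LipWinningI (f : Problem) (σ : List ℕ → ℕ) : Prop :=
  ∀ y : Baire, ¬ LipIIWins f (fun i => σ (histN y i)) y

/-- `σ` is a winning strategy for Player II in the Gale–Stewart game `A`. -/
def GSWinningII (A : Set Baire) (σ : List ℕ → ℕ) : Prop :=
  ∀ x : Baire, bpair x (fun i => σ (histN x (i + 1))) ∈ A

/-- `σ` is a winning strategy for Player I in the Gale–Stewart game `A`. -/
def GSWinningI (A : Set Baire) (σ : List ℕ → ℕ) : Prop :=
  ∀ y : Baire, bpair (fun i => σ (histN y i)) y ∉ A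

/-- The totalization `Tf` of `f`. -/
def Totalization (f : Problem) : Problem := fun p => {q | (f p).Nonempty → q ∈ f p}

/-- The paired graph `⟨graph(Tf)⟩ ⊆ ℕ^ℕ`. -/
def pairedGraph (f : Problem) : Set Baire :=
  {r | ∃ x y : Baire, r = bpair x y ∧ y ∈ Totalization f x}

/-- Domain of the word concatenation map `w*`. -/
def wstarDom (p : Baire) : Prop := PlayInf fun i => word (p i)

/-- The word concatenation map `w* : p ↦ w(p 0) w(p 1) ⋯` (on its domain). -/
noncomputable def wstar (p : Baire) : Baire := playLim fun i => word (p i)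

/-- The problem `f^w = w*⁻¹ ∘ f ∘ w*`. -/
noncomputable def wordLift (f : Problem) : Problem := fun p =>
  {q | wstarDom p ∧ (f (wstar p)).Nonempty ∧ wstarDom q ∧ wstar q ∈ f (wstar p)}

/-- The `i`-th component of a tupled sequence. -/
def tupleComp (p : Baire) (i : ℕ) : Baire := fun n => p (cpair i n)

/-- The parallelization `⟨f⟩` of `f`. -/
def Parallelization (f : Problem) : Problem := fun p =>
  {q | ∀ i, tupleComp q i ∈ f (tupleComp p i)}

/-- Turing reducibility: `p` is computable relative to the oracle `q`. -/
def TuringLe (p q : Baire) : Prop := ∃ F : Baire →. Baire, ComputablePF F ∧ p ∈ F q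

end

-- auxiliary block to be inserted before the theorem

/-- The diagonal fixed-point sequence: `Dfun q = ⟨q, Dfun q⟩`. -/
def Dfun (q : Baire) : ℕ → ℕ
  | n => if _h : n % 2 = 0 then q (n / 2) else Dfun q (n / 2)
  termination_by n => n
  decreasing_by exact Nat.div_lt_self (by omega) (by omega)

lemma Dfun_def (q : Baire) (n : ℕ) :
    Dfun q n = if n % 2 = 0 then q (n / 2) else Dfun q (n / 2) := by
  rw [Dfun]; split_ifs <;> rfl

lemma Dfun_fix (q : Baire) : bpair q (Dfun q) = Dfun q := by
  funext n
  show (if n % 2 = 0 then q (n / 2) else Dfun q (n / 2)) = Dfun q n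
  exact (Dfun_def q n).symm

lemma evens_bpair (q p : Baire) : evens (bpair q p) = q := by
  funext n
  simp only [evens, bpair]
  rw [if_pos (by omega)]
  congr 1; omega

lemma odds_bpair (q p : Baire) : odds (bpair q p) = p := by
  funext n
  simp only [odds, bpair]
  rw [if_neg (by omega)]
  congr 1; omega

lemma U_Dfun (q : Baire) : U (Dfun q) = Phi q (Dfun q) := by
  conv_lhs => rw [← Dfun_fix q]
  show Phi (evens (bpair q (Dfun q))) (odds (bpair q (Dfun q))) = _
  rw [evens_bpair, odds_bpair]

/-- One step of the approximation: append the next value. -/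
def stepA (v L : List ℕ) : List ℕ :=
  L ++ [if L.length % 2 = 0 then v.getD (L.length / 2) 0 else L.getD (L.length / 2) 0]

def bA (v : List ℕ) (n : ℕ) : List ℕ := (stepA v)^[n] []

lemma bA_succ (v : List ℕ) (n : ℕ) : bA v (n + 1) = stepA v (bA v n) :=
  Function.iterate_succ_apply' _ _ _

lemma bA_length (v : List ℕ) (n : ℕ) : (bA v n).length = n := by
  induction n with
  | zero => rfl
  | succ n ih => rw [bA_succ]; simp [stepA, ih]

lemma getD_of_isPrefixOf {v : List ℕ} {p : Baire} (hv : IsPrefixOf v p)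
    {i : ℕ} (hi : i < v.length) : v.getD i 0 = p i := by
  conv_lhs => rw [hv]
  rw [List.getD_eq_getElem _ _ (by simpa using hi)]
  simp

lemma bA_correct {v : List ℕ} {p : Baire} (hv : IsPrefixOf v p) :
    ∀ n, n ≤ v.length → bA v n = (List.range n).map (Dfun p) := by
  intro n
  induction n with
  | zero => intro _; rfl
  | succ n ih =>
    intro hn
    rw [bA_succ, ih (by omega), stepA, List.range_succ, List.map_append]
    congr 1
    simp only [List.length_map, List.length_range, List.map_cons, List.map_nil]
    congr 1
    rw [Dfun_def]
    by_cases h : n % 2 = 0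
    · rw [if_pos h, if_pos h]
      exact getD_of_isPrefixOf hv (by omega)
    · rw [if_neg h, if_neg h]
      have h2 : n / 2 < n := Nat.div_lt_self (by omega) (by omega)
      rw [List.getD_eq_getElem _ _ (by simpa using h2)]
      simp

lemma bA_mono (v : List ℕ) : ∀ {n m : ℕ}, n ≤ m → bA v n <+: bA v m := by
  intro n m h
  induction m with
  | zero => interval_cases n; exact List.prefix_refl _
  | succ m ih =>
    rcases Nat.lt_or_ge n (m + 1) with h' | h'
    · exact (ih (by omega)).trans (by rw [bA_succ]; exact List.prefix_append _ _)
    · have : n = m + 1 := by omega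
      subst this; exact List.prefix_refl _

lemma bA_stable {u v : List ℕ} (huv : u <+: v) :
    ∀ n, n ≤ u.length → bA u n = bA v n := by
  intro n
  induction n with
  | zero => intro _; rfl
  | succ n ih =>
    intro hn
    rw [bA_succ, bA_succ, ih (by omega), stepA, stepA, bA_length]
    by_cases h : n % 2 = 0
    · rw [if_pos h, if_pos h]
      have hl : n / 2 < u.length := by omega
      rw [List.getD_eq_getElem _ _ hl,
        List.getD_eq_getElem _ _ (lt_of_lt_of_le hl huv.length_le),
        huv.getElem hl]
    · rw [if_neg h, if_neg h]

/-- The monotone word function approximating `Dfun`. -/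
def hword (v : List ℕ) : List ℕ := bA v v.length

lemma hword_primrec : Primrec hword :=
  Primrec.nat_iterate Primrec.list_length (Primrec.const []) <| by
    have hlen : Primrec fun p : List ℕ × List ℕ => p.2.length :=
      Primrec.list_length.comp Primrec.snd
    have hcond : PrimrecPred fun p : List ℕ × List ℕ => p.2.length % 2 = 0 :=
      PrimrecRel.comp Primrec.eq
        ((Primrec.nat_mod).comp hlen (Primrec.const 2)) (Primrec.const 0)
    have hidx : Primrec fun p : List ℕ × List ℕ => p.2.length / 2 :=
      (Primrec.nat_div).comp hlen (Primrec.const 2)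
    have hthen : Primrec fun p : List ℕ × List ℕ => p.1.getD (p.2.length / 2) 0 :=
      (Primrec.list_getD 0).comp Primrec.fst hidx
    have helse : Primrec fun p : List ℕ × List ℕ => p.2.getD (p.2.length / 2) 0 :=
      (Primrec.list_getD 0).comp Primrec.snd hidx
    exact Primrec.list_append.comp Primrec.snd
      (Primrec.list_cons.comp (Primrec.ite hcond hthen helse) (Primrec.const []))

lemma hword_mono : MonotoneWord hword := by
  intro u v huv
  show bA u u.length <+: bA v v.length
  rw [bA_stable huv u.length le_rfl]
  exact bA_mono v huv.length_le

lemma hword_approx : Approximates hword fun p => Part.some (Dfun p) := by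
  intro p _
  constructor
  · intro v hv
    show hword v = (List.range (hword v).length).map (Dfun p)
    have h1 : hword v = (List.range v.length).map (Dfun p) :=
      bA_correct hv v.length le_rfl
    have h2 : (hword v).length = v.length := bA_length v v.length
    rw [h2, h1]
  · intro m
    refine ⟨(List.range (m + 1)).map p, ?_, ?_⟩
    · show _ = (List.range _).map p
      simp
    · show m < (bA _ _).length
      rw [bA_length]
      simp

lemma Dfun_computable : ComputableTotal Dfun :=
  ⟨hword, hword_primrec.to_comp, hword_mono, hword_approx⟩

lemma Dfun_discont : DiscontinuityFunction Dfun DIS := by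
  intro q
  constructor
  · by_cases hd : (U (Dfun q)).Dom
    · refine ⟨fun n => (U (Dfun q)).get hd n + 1, ?_⟩
      intro hmem
      have := Part.mem_unique hmem (Part.get_mem hd)
      have := congrFun this 0
      omega
    · exact ⟨fun _ => 0, fun hmem => hd (Part.dom_iff_mem.mpr ⟨_, hmem⟩)⟩
  · intro y hy hDIS
    exact hDIS (by rwa [U_Dfun q])

/-- The discontinuity problem `DIS` is computably discontinuous, witnessed by a total
computable `D` with `U(D q)` Kleene-equal to `Φ_q(D q)` for all `q`. -/
theorem DIS_computably_discontinuous :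
    ComputablyDiscontinuous DIS ∧
      ∃ D : Baire → Baire, ComputableTotal D ∧
        (∀ q : Baire, U (D q) = Phi q (D q)) ∧ DiscontinuityFunction D DIS := by
  have hD : ComputableTotal Dfun := Dfun_computable
  have hdisc : DiscontinuityFunction Dfun DIS := Dfun_discont
  exact ⟨⟨Dfun, hD, hdisc⟩, Dfun, hD, U_Dfun, hdisc⟩
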